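/- The following are equivalent for an L-structure A: (1) A is K-reduced and Spec_K(A) with the Zariski topology is an irreducible topological space; (2) for every finite family of pairs (a₁,b₁),…,(aₙ,bₙ) of elements of A with aᵢ ≠ bᵢ, the intersection ⋂ᵢ D(aᵢ,bᵢ) of the distinguished open sets D(a,b) = {θ ∈ Spec_K(A) : (a,b) ∉ θ} is nonempty; (3) A is n-separated by K for every n; (4) A is discriminated by K. -/

import Mathlib

open FirstOrder FirstOrder.Language Topology

universe u v w x y

/-- A congruence on an `L`-structure `A`, viewed as a set of pairs: an equivalence
relation respected by the interpretation of every function symbol. -/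
def IsCong (L : FirstOrder.Language.{v, w}) (A : Type*) [L.Structure A]
    (θ : Set (A × A)) : Prop :=
  (∀ a : A, (a, a) ∈ θ) ∧
  (∀ a b : A, (a, b) ∈ θ → (b, a) ∈ θ) ∧
  (∀ a b c : A, (a, b) ∈ θ → (b, c) ∈ θ → (a, c) ∈ θ) ∧
  ∀ (n : ℕ) (f : L.Functions n) (y z : Fin n → A),
    (∀ i, (y i, z i) ∈ θ) →
      (Structure.funMap f y, Structure.funMap f z) ∈ θ

/-- The setoid associated to a congruence. -/
def congSetoid {L : FirstOrder.Language.{v, w}} {A : Type*} [L.Structure A]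
    (θ : Set (A × A)) (hθ : IsCong L A θ) : Setoid A :=
  ⟨fun a b => (a, b) ∈ θ,
    ⟨fun a => hθ.1 a, fun h => hθ.2.1 _ _ h, fun h h' => hθ.2.2.1 _ _ _ h h'⟩⟩

/-- The natural `L`-structure on the quotient `A/θ` of `A` by a congruence `θ`. -/
noncomputable instance congQuotStructure {L : FirstOrder.Language.{v, w}} [L.IsAlgebraic]
    {A : Type*} [L.Structure A] {θ : Set (A × A)} {hθ : IsCong L A θ} :
    L.Structure (Quotient (congSetoid θ hθ)) where
  funMap {_} f q := Quotient.mk (congSetoid θ hθ)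
    (Structure.funMap f fun i => (q i).out)
  RelMap {_} r _ := isEmptyElim r

/-- The kernel of a map, as a set of pairs. -/
def mapKer {A : Type*} {B : Type*} (h : A → B) : Set (A × A) :=
  {p : A × A | h p.1 = h p.2}

/-- The preimage of a set of pairs under a map. -/
def pairPreimage {A : Type*} {B : Type*} (h : A → B) (θ : Set (B × B)) : Set (A × A) :=
  {p : A × A | (h p.1, h p.2) ∈ θ}

/-- The pushforward `ψ/θ = {(a/θ, a'/θ) : (a, a') ∈ ψ}` of a set of pairs to the
quotient by the congruence `θ`. -/
def quotPush {L : FirstOrder.Language.{v, w}} {A : Type*} [L.Structure A]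
    (θ : Set (A × A)) (hθ : IsCong L A θ) (ψ : Set (A × A)) :
    Set (Quotient (congSetoid θ hθ) × Quotient (congSetoid θ hθ)) :=
  {p | ∃ a a' : A, Quotient.mk (congSetoid θ hθ) a = p.1 ∧
        Quotient.mk (congSetoid θ hθ) a' = p.2 ∧ (a, a') ∈ ψ}

/-- The `K`-spectrum of `A`: the set of kernels of homomorphisms from `A` into
members of the class `K` (equivalently, the set of congruences `θ` on `A` such that
`A/θ` embeds into a member of `K`). -/
def SpecK {L : FirstOrder.Language.{v, w}} (K : ∀ B : Type u, L.Structure B → Prop)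
    (A : Type*) [L.Structure A] : Set (Set (A × A)) :=
  {θ | ∃ (B : Type u) (iB : L.Structure B), K B iB ∧
        ∃ h : @Language.Hom L A B _ iB, θ = mapKer h.toFun}

/-- The diagonal congruence on `A`. -/
def diagCong (A : Type*) : Set (A × A) := {p : A × A | p.1 = p.2}

/-- `A` is `K`-reduced: the intersection of all congruences in `Spec_K A` is the diagonal. -/
def IsKReduced {L : FirstOrder.Language.{v, w}} (K : ∀ B : Type u, L.Structure B → Prop)
    (A : Type*) [L.Structure A] : Prop :=
  ⋂₀ SpecK K A = diagCong A

/-- A `K`-radical congruence: an intersection of a (possibly empty) family of members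
of `Spec_K A` (the empty intersection being `A × A`). -/
def IsKRadical {L : FirstOrder.Language.{v, w}} (K : ∀ B : Type u, L.Structure B → Prop)
    (A : Type*) [L.Structure A] (θ : Set (A × A)) : Prop :=
  ∃ F : Set (Set (A × A)), F ⊆ SpecK K A ∧ θ = ⋂₀ F

/-- The Zariski closed subset of the `K`-spectrum determined by `S ⊆ A × A`. -/
def VClosed {L : FirstOrder.Language.{v, w}} (K : ∀ B : Type u, L.Structure B → Prop)
    (A : Type*) [L.Structure A] (S : Set (A × A)) : Set (Set (A × A)) :=
  {θ ∈ SpecK K A | S ⊆ θ}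

/-- The `K`-radical of a set of pairs `S`. -/
def radK {L : FirstOrder.Language.{v, w}} (K : ∀ B : Type u, L.Structure B → Prop)
    (A : Type*) [L.Structure A] (S : Set (A × A)) : Set (A × A) :=
  ⋂₀ VClosed K A S

/-- The Zariski closed subset of the `K`-spectrum (as a subtype) determined by `S`. -/
def VZar {L : FirstOrder.Language.{v, w}} (K : ∀ B : Type u, L.Structure B → Prop)
    (A : Type*) [L.Structure A] (S : Set (A × A)) : Set {θ // θ ∈ SpecK K A} :=
  {θ | S ⊆ (θ : Set (A × A))}

/-- The Zariski topology on the `K`-spectrum of `A`: the closed sets are the arbitrary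
intersections of finite unions of Zariski closed sets `VZar K A S`. -/
def zariskiTopology {L : FirstOrder.Language.{v, w}} (K : ∀ B : Type u, L.Structure B → Prop)
    (A : Type*) [L.Structure A] : TopologicalSpace {θ // θ ∈ SpecK K A} :=
  TopologicalSpace.generateFrom {U | ∃ S : Set (A × A), U = (VZar K A S)ᶜ}

/-- A product structure on a dependent function type. -/
instance piStructure {L : FirstOrder.Language.{v, w}} [L.IsAlgebraic]
    {ι : Type*} {B : ι → Type*} [∀ i, L.Structure (B i)] :
    L.Structure (∀ i, B i) where
  funMap {_} f q i := Structure.funMap f fun j => q j i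
  RelMap {_} r _ := isEmptyElim r

/-- `A` embeds into a direct product of a (possibly empty) family of members of `K`. -/
def EmbedsInProduct {L : FirstOrder.Language.{v, w}} [L.IsAlgebraic]
    (K : ∀ B : Type u, L.Structure B → Prop) (A : Type*) [L.Structure A] : Prop :=
  ∃ (ι : Type u) (B : ι → Type u) (iB : ∀ i, L.Structure (B i)),
    (∀ i, K (B i) (iB i)) ∧
      Nonempty (@Language.Embedding L A (∀ i, B i) _ (@piStructure L _ ι B iB))

/-- The term-algebra structure on `L.Term α`. -/
instance termStructure {L : FirstOrder.Language.{v, w}} [L.IsAlgebraic] {α : Type x} :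
    L.Structure (L.Term α) where
  funMap {_} f q := Term.func f q
  RelMap {_} r _ := isEmptyElim r

/-- Evaluation of a term at an assignment `a : X → A`, for an explicitly given structure. -/
def evalAt {L : FirstOrder.Language.{v, w}} {A : Type*} (iA : L.Structure A)
    {X : Type x} (a : X → A) : L.Term X → A :=
  letI := iA; fun t => Term.realize a t

/-- An equation (pair of terms) holds at an assignment `a`. -/
def EqHolds {L : FirstOrder.Language.{v, w}} {A : Type*} (iA : L.Structure A)
    {X : Type x} (a : X → A) (pq : L.Term X × L.Term X) : Prop :=
  evalAt iA a pq.1 = evalAt iA a pq.2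

/-- `K` is equationally Noetherian. -/
def EqNoetherian {L : FirstOrder.Language.{v, w}}
    (K : ∀ B : Type u, L.Structure B → Prop) : Prop :=
  ∀ (n : ℕ) (T : Set (L.Term (Fin n) × L.Term (Fin n))),
    ∃ T₀ ⊆ T, T₀.Finite ∧
      ∀ (A : Type u) (iA : L.Structure A), K A iA → ∀ a : Fin n → A,
        (∀ pq ∈ T₀, EqHolds iA a pq) → ∀ pq ∈ T, EqHolds iA a pq

/-- `A` is discriminated by `K`: every finite subset is separated injectively by a
homomorphism into a member of `K`. -/
def DiscriminatedBy {L : FirstOrder.Language.{v, w}}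
    (K : ∀ B : Type u, L.Structure B → Prop) (A : Type*) [iA : L.Structure A] : Prop :=
  ∀ W : Set A, W.Finite → ∃ (B : Type u) (iB : L.Structure B), K B iB ∧
    ∃ h : @Language.Hom L A B _ iB, Set.InjOn h.toFun W

/-- `A` is `n`-separated by `K` for every `n`. -/
def NSeparatedBy {L : FirstOrder.Language.{v, w}}
    (K : ∀ B : Type u, L.Structure B → Prop) (A : Type*) [iA : L.Structure A] : Prop :=
  ∀ (n : ℕ) (a b : Fin n → A), (∀ i, a i ≠ b i) →
    ∃ (B : Type u) (iB : L.Structure B), K B iB ∧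
      ∃ h : @Language.Hom L A B _ iB, ∀ i, h.toFun (a i) ≠ h.toFun (b i)

/-- Any member of the `K`-spectrum is a congruence. -/
theorem isCong_of_mem_specK {L : FirstOrder.Language.{v, w}}
    {K : ∀ B : Type u, L.Structure B → Prop} {A : Type*} [L.Structure A]
    {θ : Set (A × A)} (hθ : θ ∈ SpecK K A) : IsCong L A θ := by
  obtain ⟨B, iB, -, h, rfl⟩ := hθ
  refine ⟨fun a => rfl, fun a b hab => hab.symm, fun a b c hab hbc => hab.trans hbc,
    fun n f y z hyz => ?_⟩
  show h.toFun _ = h.toFun _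
  have hy := @Language.Hom.map_fun' L A B _ iB h n f y
  have hz := @Language.Hom.map_fun' L A B _ iB h n f z
  rw [hy, hz]
  exact congrArg _ (funext fun i => hyz i)

/-- An arbitrary intersection of congruences is a congruence. -/
theorem isCong_sInter {L : FirstOrder.Language.{v, w}} {A : Type*} [L.Structure A]
    {X : Set (Set (A × A))} (hX : ∀ θ ∈ X, IsCong L A θ) : IsCong L A (⋂₀ X) :=
  ⟨fun a θ hθ => (hX θ hθ).1 a,
   fun a b hab θ hθ => (hX θ hθ).2.1 a b (hab θ hθ),
   fun a b c hab hbc θ hθ => (hX θ hθ).2.2.1 a b c (hab θ hθ) (hbc θ hθ),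
   fun n f y z hyz θ hθ => (hX θ hθ).2.2.2 n f y z (fun i => hyz i θ hθ)⟩



section Statement19Aux

variable {L : FirstOrder.Language.{v, w}} {K : ∀ B : Type u, L.Structure B → Prop}
  {A : Type u} [L.Structure A]

theorem diag_subset_of_mem_specK' {θ : Set (A × A)} (hθ : θ ∈ SpecK K A) :
    diagCong A ⊆ θ := by
  obtain ⟨B, iB, -, h, rfl⟩ := hθ
  intro p hp
  show h.toFun p.1 = h.toFun p.2
  rw [show p.1 = p.2 from hp]

theorem sep_of_nsep (h3 : NSeparatedBy K A) (P : Finset (A × A))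
    (hP : ∀ p ∈ P, p.1 ≠ p.2) :
    ∃ ξ : {θ // θ ∈ SpecK K A}, ∀ p ∈ P, p ∉ ξ.1 := by
  classical
  let e := Fintype.equivFin ↥P
  obtain ⟨B, iB, hB, h, hh⟩ := h3 (Fintype.card ↥P)
    (fun i => ((e.symm i : A × A)).1) (fun i => ((e.symm i : A × A)).2)
    (fun i => hP _ (e.symm i).2)
  refine ⟨⟨mapKer h.toFun, B, iB, hB, h, rfl⟩, fun p hp hker => ?_⟩
  have := hh (e ⟨p, hp⟩)
  rw [Equiv.symm_apply_apply] at this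
  exact this hker

theorem pairs_of_basic (ξ : {θ // θ ∈ SpecK K A}) (f : Set (Set {θ // θ ∈ SpecK K A}))
    (hf : f.Finite) :
    f ⊆ {U | ∃ S : Set (A × A), U = (VZar K A S)ᶜ} → ξ ∈ ⋂₀ f →
    ∃ P : Finset (A × A), (∀ p ∈ P, p.1 ≠ p.2) ∧
      ∀ η : {θ // θ ∈ SpecK K A}, (∀ p ∈ P, p ∉ η.1) → η ∈ ⋂₀ f := by
  classical
  refine Set.Finite.induction_on (motive := fun f _ => f ⊆ {U | ∃ S : Set (A × A), U = (VZar K A S)ᶜ} → ξ ∈ ⋂₀ f →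
    ∃ P : Finset (A × A), (∀ p ∈ P, p.1 ≠ p.2) ∧
      ∀ η : {θ // θ ∈ SpecK K A}, (∀ p ∈ P, p ∉ η.1) → η ∈ ⋂₀ f) f hf ?_ ?_
  · intro _ _
    exact ⟨∅, by simp, fun η _ => by simp⟩
  · rintro u f hu hfin IH hsub hξ
    obtain ⟨P, hP, hPmem⟩ := IH (fun v hv => hsub (Set.mem_insert_of_mem _ hv))
      (fun v hv => hξ v (Set.mem_insert_of_mem _ hv))
    obtain ⟨S, rfl⟩ := hsub (Set.mem_insert u f)
    have hξu : ¬ S ⊆ (ξ : Set (A × A)) := hξ _ (Set.mem_insert _ _)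
    obtain ⟨p, hpS, hpξ⟩ : ∃ p ∈ S, p ∉ ξ.1 := by
      by_contra hc
      push_neg at hc
      exact hξu fun q hq => hc q hq
    refine ⟨insert p P, ?_, ?_⟩
    · intro q hq
      rcases Finset.mem_insert.1 hq with rfl | hq
      · exact fun hq12 => hpξ (diag_subset_of_mem_specK' ξ.2 hq12)
      · exact hP q hq
    · intro η hη
      rw [Set.sInter_insert]
      refine ⟨fun hSη => hη p (Finset.mem_insert_self _ _) (hSη hpS),
        hPmem η fun q hq => hη q (Finset.mem_insert_of_mem hq)⟩

end Statement19Aux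

/-- the following are equivalent: `A` is `K`-reduced with irreducible
`K`-spectrum; all finite intersections of distinguished open sets `D(aᵢ, bᵢ)` (with
`aᵢ ≠ bᵢ`) are nonempty; `A` is `n`-separated by `K` for every `n`; `A` is discriminated
by `K`. -/
theorem statement19 {L : FirstOrder.Language.{v, w}}
    (K : ∀ B : Type u, L.Structure B → Prop) (A : Type u) [L.Structure A] :
    [IsKReduced K A ∧ @IrreducibleSpace {θ // θ ∈ SpecK K A} (zariskiTopology K A),
      ∀ (n : ℕ) (a b : Fin n → A), (∀ i, a i ≠ b i) →
        (⋂ i, {θ : {θ // θ ∈ SpecK K A} | (a i, b i) ∉ θ.1}).Nonempty,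
      NSeparatedBy K A,
      DiscriminatedBy K A].TFAE := by
  classical
  letI := zariskiTopology K A
  tfae_have h23 : 2 ↔ 3 := by
    constructor
    · intro h2 n a b hab
      obtain ⟨ξ, hξ⟩ := h2 n a b hab
      rw [Set.mem_iInter] at hξ
      obtain ⟨B, iB, hB, h, hker⟩ := ξ.2
      refine ⟨B, iB, hB, h, fun i hi => hξ i ?_⟩
      rw [hker]; exact hi
    · intro h3 n a b hab
      obtain ⟨B, iB, hB, h, hh⟩ := h3 n a b hab
      exact ⟨⟨mapKer h.toFun, B, iB, hB, h, rfl⟩, Set.mem_iInter.2 fun i => hh i⟩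
  tfae_have h34 : 3 → 4 := by
    intro h3 W hW
    obtain ⟨ξ, hξ⟩ := sep_of_nsep h3 ((hW.toFinset ×ˢ hW.toFinset).filter fun p => p.1 ≠ p.2)
      (fun p hp => (Finset.mem_filter.1 hp).2)
    obtain ⟨B, iB, hB, h, hker⟩ := ξ.2
    refine ⟨B, iB, hB, h, fun x hx y hy hxy => ?_⟩
    by_contra hne
    exact hξ (x, y)
      (Finset.mem_filter.2 ⟨Finset.mem_product.2 ⟨hW.mem_toFinset.2 hx, hW.mem_toFinset.2 hy⟩, hne⟩)
      (by rw [hker]; exact hxy)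
  tfae_have h43 : 4 → 3 := by
    intro h4 n a b hab
    obtain ⟨B, iB, hB, h, hinj⟩ := h4 (Set.range a ∪ Set.range b)
      ((Set.finite_range a).union (Set.finite_range b))
    exact ⟨B, iB, hB, h, fun i hi => hab i (hinj (Or.inl ⟨i, rfl⟩) (Or.inr ⟨i, rfl⟩) hi)⟩
  tfae_have h21 : 2 → 1 := by
    intro h2
    have h3 : NSeparatedBy K A := h23.1 h2
    constructor
    · apply Set.Subset.antisymm
      · intro p hp
        by_contra hpd
        obtain ⟨ξ, hξ⟩ := sep_of_nsep h3 {p} (by simpa [diagCong] using hpd)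
        exact hξ p (Finset.mem_singleton_self p) (hp ξ.1 ξ.2)
      · exact fun p hp θ hθ => diag_subset_of_mem_specK' hθ hp
    · have hne : Nonempty {θ // θ ∈ SpecK K A} := by
        obtain ⟨ξ, -⟩ := sep_of_nsep h3 ∅ (by simp)
        exact ⟨ξ⟩
      refine { toNonempty := hne, isPreirreducible_univ := ?_ }
      rintro U V hU hV ⟨ξU, -, hξU⟩ ⟨ξV, -, hξV⟩
      have hbasis := TopologicalSpace.isTopologicalBasis_of_subbasis
        (rfl : zariskiTopology K A = TopologicalSpace.generateFrom
          {U | ∃ S : Set (A × A), U = (VZar K A S)ᶜ})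
      obtain ⟨u, ⟨f, ⟨hffin, hfsub⟩, rfl⟩, hξUu, huU⟩ := hbasis.exists_subset_of_mem_open hξU hU
      obtain ⟨v, ⟨g, ⟨hgfin, hgsub⟩, rfl⟩, hξVv, hvV⟩ := hbasis.exists_subset_of_mem_open hξV hV
      obtain ⟨P, hP, hPf⟩ := pairs_of_basic ξU f hffin hfsub hξUu
      obtain ⟨Q, hQ, hQg⟩ := pairs_of_basic ξV g hgfin hgsub hξVv
      obtain ⟨ξ, hξ⟩ := sep_of_nsep h3 (P ∪ Q)
        (fun p hp => (Finset.mem_union.1 hp).elim (hP p) (hQ p))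
      exact ⟨ξ, Set.mem_univ _,
        huU (hPf ξ fun p hp => hξ p (Finset.mem_union_left _ hp)),
        hvV (hQg ξ fun p hp => hξ p (Finset.mem_union_right _ hp))⟩
  tfae_have h12 : 1 → 2 := by
    rintro ⟨hred, hirr⟩ n a b hab
    haveI := hirr
    have hopen : ∀ p : A × A, IsOpen {θ : {θ // θ ∈ SpecK K A} | p ∉ θ.1} := by
      intro p
      have heq : {θ : {θ // θ ∈ SpecK K A} | p ∉ θ.1} = (VZar K A {p})ᶜ := by
        ext θ
        simp [VZar, Set.singleton_subset_iff]
      rw [heq]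
      exact TopologicalSpace.isOpen_generateFrom_of_mem ⟨{p}, rfl⟩
    have hDne : ∀ p : A × A, p.1 ≠ p.2 →
        ({θ : {θ // θ ∈ SpecK K A} | p ∉ θ.1}).Nonempty := by
      intro p hp
      have hnd : p ∉ ⋂₀ SpecK K A := by rw [hred]; exact hp
      have h2 : ¬ ∀ θ ∈ SpecK K A, p ∈ θ := fun h => hnd (Set.mem_sInter.2 h)
      push_neg at h2
      obtain ⟨θ, hθ, hpθ⟩ := h2
      exact ⟨⟨θ, hθ⟩, hpθ⟩
    have key : ∀ s : Finset (Fin n),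
        IsOpen (⋂ i ∈ s, {θ : {θ // θ ∈ SpecK K A} | (a i, b i) ∉ θ.1}) ∧
        (⋂ i ∈ s, {θ : {θ // θ ∈ SpecK K A} | (a i, b i) ∉ θ.1}).Nonempty := by
      intro s
      classical
      induction s using Finset.induction_on with
      | empty =>
        refine ⟨by simp, ?_⟩
        simp
      | insert _ _ ha ih =>
        rw [Finset.set_biInter_insert]
        exact ⟨(hopen _).inter ih.1,
          nonempty_preirreducible_inter (hopen _) ih.1 (hDne _ (hab _)) ih.2⟩
    have hfin := (key Finset.univ).2
    simpa using hfin
  tfae_finish
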